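/- arXiv:1904.01679 — 2 statements merged into one kernel-verified Lean document; each statement's English description precedes it below -/
import Mathlib

section
/- Every continuous parametrized functional is parametrized fixed point adjoint to its conjugate: if ψ : hom(X,Y) × hom(P,Q) → hom(X,Y) is Scott-continuous and ψ̄ : hom(Y,X) × hom(Q,P) → hom(Y,X) is defined by ψ̄(g,q) = ψ(g†, q†)†, then for all p : P → Q, (pfix ψ)(p)† = (pfix ψ̄)(p†), where (pfix ψ)(p) = sup_n ψⁿ(⊥, p) with ψ⁰(x,p) = x and ψ^{n+1}(x,p) = ψ(ψⁿ(x,p), p). -/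
open CategoryTheory

universe v u

/-- The `n`-fold parametrized iterate: `ψ⁰(x,p) = x`, `ψ^{n+1}(x,p) = ψ(ψⁿ(x,p), p)`. -/
def pIter {A B : Type*} (ψ : A × B → A) : ℕ → A → B → A
  | 0, x, _ => x
  | n + 1, x, p => ψ (pIter ψ n x p, p)

/-- Every continuous parametrized functional is parametrized fixed
point adjoint to its conjugate: for Scott-continuous
`ψ : hom(X,Y) × hom(P,Q) → hom(X,Y)` and `ψ̄(g,q) = ψ(g†,q†)†`, for all
`p : P ⟶ Q`, `(pfix ψ)(p)† = (pfix ψ̄)(p†)`, where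
`(pfix ψ)(p) = sup_n ψⁿ(⊥,p)`. -/
theorem pfix_conjugate_adjoint {C : Type u} [Category.{v} C]
    [∀ X Y : C, CompletePartialOrder (X ⟶ Y)] [∀ X Y : C, OrderBot (X ⟶ Y)]
    (dag : ∀ {X Y : C}, (X ⟶ Y) → (Y ⟶ X))
    (dag_id : ∀ X : C, dag (𝟙 X) = 𝟙 X)
    (dag_comp : ∀ {X Y Z : C} (f : X ⟶ Y) (g : Y ⟶ Z), dag (f ≫ g) = dag g ≫ dag f)
    (dag_dag : ∀ {X Y : C} (f : X ⟶ Y), dag (dag f) = f)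
    (dag_mono : ∀ {X Y : C} {f g : X ⟶ Y}, f ≤ g → dag f ≤ dag g)
    (comp_cont : ∀ {X Y Z : C} (f : X ⟶ Y), ScottContinuous (fun g : Y ⟶ Z => f ≫ g))
    (comp_cont' : ∀ {X Y Z : C} (g : Y ⟶ Z), ScottContinuous (fun f : X ⟶ Y => f ≫ g))
    (comp_strict : ∀ {X Y Z : C} (f : X ⟶ Y) (g : Y ⟶ Z),
      f ≫ (⊥ : Y ⟶ Z) = (⊥ : X ⟶ Z) ∧ (⊥ : X ⟶ Y) ≫ g = (⊥ : X ⟶ Z))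
    {X Y P Q : C} (ψ : (X ⟶ Y) × (P ⟶ Q) → (X ⟶ Y)) (hψ : ScottContinuous ψ) :
    ∀ p : P ⟶ Q,
      dag (sSup (Set.range fun n => pIter ψ n ⊥ p)) =
        sSup (Set.range fun n =>
          pIter (fun gq : (Y ⟶ X) × (Q ⟶ P) => dag (ψ (dag gq.1, dag gq.2)))
            n ⊥ (dag p)) := by
  intro p
  have dag_bot : dag (⊥ : X ⟶ Y) = (⊥ : Y ⟶ X) := by
    have h := dag_mono (bot_le : (⊥ : X ⟶ Y) ≤ dag (⊥ : Y ⟶ X))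
    rw [dag_dag] at h
    exact le_antisymm h bot_le
  set ψ' : (Y ⟶ X) × (Q ⟶ P) → (Y ⟶ X) :=
    fun gq => dag (ψ (dag gq.1, dag gq.2)) with hψ'
  -- pointwise correspondence of iterates
  have hiter : ∀ n, pIter ψ' n ⊥ (dag p) = dag (pIter ψ n ⊥ p) := by
    intro n
    induction n with
    | zero => simp [pIter, dag_bot]
    | succ n ih =>
      simp only [pIter]
      rw [ih]
      simp [hψ', dag_dag]
  -- monotonicity of iterates in n
  have hmono : Monotone (fun n => pIter ψ n ⊥ p) := by
    apply monotone_nat_of_le_succ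
    intro n
    induction n with
    | zero => exact bot_le
    | succ n ih =>
      exact hψ.monotone (Prod.mk_le_mk.mpr ⟨ih, le_rfl⟩)
  have hdir : DirectedOn (· ≤ ·) (Set.range fun n => pIter ψ n ⊥ p) :=
    (hmono.directed_le).directedOn_range
  have hmono' : Monotone (fun n => pIter ψ' n ⊥ (dag p)) := by
    intro a b hab
    simp only [hiter]
    exact dag_mono (hmono hab)
  have hdir' : DirectedOn (· ≤ ·) (Set.range fun n => pIter ψ' n ⊥ (dag p)) :=
    (hmono'.directed_le).directedOn_range
  have hL : IsLUB (Set.range fun n => pIter ψ n ⊥ p)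
      (sSup (Set.range fun n => pIter ψ n ⊥ p)) :=
    CompletePartialOrder.lubOfDirected _ hdir
  have hR : IsLUB (Set.range fun n => pIter ψ' n ⊥ (dag p))
      (sSup (Set.range fun n => pIter ψ' n ⊥ (dag p))) :=
    CompletePartialOrder.lubOfDirected _ hdir'
  -- dag of the LUB is the LUB of the conjugate iterates
  have hLUB : IsLUB (Set.range fun n => pIter ψ' n ⊥ (dag p))
      (dag (sSup (Set.range fun n => pIter ψ n ⊥ p))) := by
    constructor
    · rintro _ ⟨n, rfl⟩
      show pIter ψ' n ⊥ (dag p) ≤ _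
      rw [hiter]
      exact dag_mono (hL.1 ⟨n, rfl⟩)
    · intro u hu
      have h : sSup (Set.range fun n => pIter ψ n ⊥ p) ≤ dag u := by
        apply hL.2
        rintro _ ⟨n, rfl⟩
        have hmem : pIter ψ' n ⊥ (dag p) ∈ Set.range fun n => pIter ψ' n ⊥ (dag p) := ⟨n, rfl⟩
        have := dag_mono (hu hmem)
        rwa [hiter, dag_dag] at this
      have := dag_mono h
      rwa [dag_dag] at this
  exact hLUB.unique hR
end

section
/- Parametrized fixed points preserve conjugation: for Scott-continuous ψ : hom(X,Y) × hom(P,Q) → hom(X,Y), the conjugate of its parametrized fixed point equals the parametrized fixed point of its conjugate, i.e., for all p : P → Q, (pfix ψ)(p†)† = (pfix ψ̄)(p), where ψ̄(g,q) = ψ(g†,q†)†. -/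
open CategoryTheory

universe v u

/-- Parametrized fixed points preserve conjugation: for
Scott-continuous `ψ : hom(X,Y) × hom(P,Q) → hom(X,Y)`, the conjugate of its
parametrized fixed point equals the parametrized fixed point of its conjugate:
for all `q : Q ⟶ P`, `(pfix ψ)(q†)† = (pfix ψ̄)(q)`, where
`ψ̄(g,q) = ψ(g†,q†)†` and `(pfix ψ)(p) = sup_n ψⁿ(⊥,p)`. -/
theorem pfix_preserves_conjugation {C : Type u} [Category.{v} C]
    [∀ X Y : C, CompletePartialOrder (X ⟶ Y)] [∀ X Y : C, OrderBot (X ⟶ Y)]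
    (dag : ∀ {X Y : C}, (X ⟶ Y) → (Y ⟶ X))
    (dag_id : ∀ X : C, dag (𝟙 X) = 𝟙 X)
    (dag_comp : ∀ {X Y Z : C} (f : X ⟶ Y) (g : Y ⟶ Z), dag (f ≫ g) = dag g ≫ dag f)
    (dag_dag : ∀ {X Y : C} (f : X ⟶ Y), dag (dag f) = f)
    (dag_mono : ∀ {X Y : C} {f g : X ⟶ Y}, f ≤ g → dag f ≤ dag g)
    {X Y P Q : C} (ψ : (X ⟶ Y) × (P ⟶ Q) → (X ⟶ Y)) (hψ : ScottContinuous ψ) :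
    ∀ q : Q ⟶ P,
      dag (sSup (Set.range fun n => pIter ψ n ⊥ (dag q))) =
        sSup (Set.range fun n =>
          pIter (fun gq : (Y ⟶ X) × (Q ⟶ P) => dag (ψ (dag gq.1, dag gq.2)))
            n ⊥ q) := by
  intro q
  set φ : (Y ⟶ X) × (Q ⟶ P) → (Y ⟶ X) := fun gq => dag (ψ (dag gq.1, dag gq.2)) with hφ
  have hbot : ∀ {A B : C}, dag (⊥ : A ⟶ B) = (⊥ : B ⟶ A) := by
    intro A B
    refine le_antisymm ?_ bot_le
    have := dag_mono (bot_le : (⊥ : A ⟶ B) ≤ dag (⊥ : B ⟶ A))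
    simpa [dag_dag] using this
  -- the conjugate iterate
  have hiter : ∀ n, dag (pIter ψ n ⊥ (dag q)) = pIter φ n ⊥ q := by
    intro n
    induction n with
    | zero => simp [pIter, hbot]
    | succ n ih =>
      simp only [pIter, hφ, ← ih, dag_dag]
      rw [← hφ, ← ih, dag_dag]
  -- order isomorphism from dag
  let e : (X ⟶ Y) ≃o (Y ⟶ X) :=
    { toFun := dag
      invFun := dag
      left_inv := fun f => dag_dag f
      right_inv := fun f => dag_dag f
      map_rel_iff' := by
        intro f g
        constructor
        · intro h; simpa [dag_dag] using dag_mono h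
        · exact fun h => dag_mono h }
  -- monotonicity of the chains
  have hmono : Monotone ψ := hψ.monotone
  have hchain : Monotone fun n => pIter ψ n ⊥ (dag q) := by
    refine monotone_nat_of_le_succ ?_
    intro n
    induction n with
    | zero => exact bot_le
    | succ n ih =>
      exact hmono (Prod.mk_le_mk.2 ⟨ih, le_rfl⟩)
  have hchain' : Monotone fun n => pIter φ n ⊥ q := by
    intro a b hab
    have := dag_mono (hchain hab)
    simpa [hiter] using this
  have hdir : DirectedOn (· ≤ ·) (Set.range fun n => pIter ψ n ⊥ (dag q)) :=
    hchain.directed_le.directedOn_range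
  have hdir' : DirectedOn (· ≤ ·) (Set.range fun n => pIter φ n ⊥ q) :=
    hchain'.directed_le.directedOn_range
  have hL : IsLUB (Set.range fun n => pIter ψ n ⊥ (dag q))
      (sSup (Set.range fun n => pIter ψ n ⊥ (dag q))) :=
    CompletePartialOrder.lubOfDirected _ hdir
  have hL' : IsLUB (Set.range fun n => pIter φ n ⊥ q)
      (sSup (Set.range fun n => pIter φ n ⊥ q)) :=
    CompletePartialOrder.lubOfDirected _ hdir'
  have himg : (Set.range fun n => pIter φ n ⊥ q) =
      e '' (Set.range fun n => pIter ψ n ⊥ (dag q)) := by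
    rw [← Set.range_comp]
    exact congrArg Set.range (funext fun n => (hiter n).symm)
  have hL2 : IsLUB (Set.range fun n => pIter φ n ⊥ q)
      (dag (sSup (Set.range fun n => pIter ψ n ⊥ (dag q)))) := by
    rw [himg]
    have hd : e.symm (dag (sSup (Set.range fun n => pIter ψ n ⊥ (dag q)))) =
        sSup (Set.range fun n => pIter ψ n ⊥ (dag q)) := dag_dag _
    refine (e.isLUB_image).2 ?_
    rw [hd]
    exact hL
  exact hL2.unique hL'
end
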